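/- Let G be an additive abelian group, let c₁,…,c_k ∈ G have finite orders n₁,…,n_k ∈ ℤ⁺, and let P₁,…,P_k ∈ ℤ[x]. If the sum P₁(x)·c₁ + ⋯ + P_k(x)·c_k (where P(x)·c means the ℤ-scalar multiple) vanishes for |S(n₁,…,n_k)| consecutive integers x, then it vanishes for all x ∈ ℤ. -/

import Mathlib

private lemma aux_lcm_ne_zero {ι : Type*} (F : Finset ι) (f : ι → ℕ)
    (hf : ∀ i ∈ F, f i ≠ 0) : F.lcm f ≠ 0 := by
  simp only [Ne, Finset.lcm_eq_zero_iff, Set.mem_image, Finset.mem_coe]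
  rintro ⟨i, hi, h0⟩
  exact hf i hi h0

private lemma aux_pow_dvd_lcm {ι : Type*} (F : Finset ι) (f : ι → ℕ)
    {p e : ℕ} (hp : p.Prime) (he : e ≠ 0) (hf : ∀ i ∈ F, f i ≠ 0)
    (h : p ^ e ∣ F.lcm f) : ∃ i ∈ F, p ^ e ∣ f i := by
  classical
  induction F using Finset.induction with
  | empty =>
      rw [Finset.lcm_empty] at h
      exact absurd ((pow_eq_one_iff.mp (Nat.dvd_one.mp h)).resolve_right he) hp.one_lt.ne'
  | @insert i F hiF ih =>
      rw [Finset.lcm_insert] at h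
      have hfi : f i ≠ 0 := hf i (Finset.mem_insert_self i F)
      have hb : F.lcm f ≠ 0 := aux_lcm_ne_zero F f fun j hj => hf j (Finset.mem_insert_of_mem hj)
      rw [lcm_eq_nat_lcm] at h
      have hlt : e ≤ (Nat.lcm (f i) (F.lcm f)).factorization p :=
        (Nat.Prime.pow_dvd_iff_le_factorization hp (Nat.lcm_ne_zero hfi hb)).mp h
      rw [Nat.factorization_lcm hfi hb] at hlt
      simp only [Finsupp.sup_apply, le_sup_iff] at hlt
      rcases hlt with hlt | hlt
      · exact ⟨i, Finset.mem_insert_self i F,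
          (Nat.Prime.pow_dvd_iff_le_factorization hp hfi).mpr hlt⟩
      · obtain ⟨j, hj, hdj⟩ := ih (fun j hj => hf j (Finset.mem_insert_of_mem hj))
          ((Nat.Prime.pow_dvd_iff_le_factorization hp hb).mpr hlt)
        exact ⟨j, Finset.mem_insert_of_mem hj, hdj⟩

theorem stmt_11 {G : Type*} [AddCommGroup G] (k : ℕ) (n : Fin k → ℕ)
    (hn : ∀ s, 0 < n s) (c : Fin k → G) (hord : ∀ s, addOrderOf (c s) = n s)
    (P : Fin k → Polynomial ℤ)
    (S : Finset ℚ)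
    (hS : S = Finset.univ.biUnion fun s =>
      (Finset.range (n s)).image fun r : ℕ => (r : ℚ) / (n s))
    (a : ℤ)
    (h : ∀ r : ℕ, r < S.card → ∑ s, (P s).eval (a + r) • c s = 0) :
    ∀ x : ℤ, ∑ s, (P s).eval x • c s = 0 := by
  intro x
  rcases Nat.eq_zero_or_pos k with hk | hk
  · subst hk; simp
  have hne : (Finset.univ : Finset (Fin k)).Nonempty := ⟨⟨0, hk⟩, Finset.mem_univ _⟩
  -- anything divisible by n s kills c s
  have hkill : ∀ s : Fin k, ∀ z : ℤ, (n s : ℤ) ∣ z → z • c s = 0 := by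
    rintro s z ⟨t, rfl⟩
    rw [mul_comm, mul_zsmul, natCast_zsmul, ← hord s, addOrderOf_nsmul_eq_zero, smul_zero]
  -- n s ≤ S.card
  have hnm : ∀ s, n s ≤ S.card := by
    intro s
    have hn' : ((n s : ℚ)) ≠ 0 := Nat.cast_ne_zero.mpr (hn s).ne'
    have hsub : ((Finset.range (n s)).image fun r : ℕ => (r : ℚ) / (n s)) ⊆ S := by
      rw [hS]
      exact Finset.subset_biUnion_of_mem
        (fun s => (Finset.range (n s)).image fun r : ℕ => (r : ℚ) / (n s)) (Finset.mem_univ s)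
    have hcard : ((Finset.range (n s)).image fun r : ℕ => (r : ℚ) / (n s)).card = n s := by
      have hinj : Function.Injective fun r : ℕ => (r : ℚ) / (n s) := by
        intro r r' hrr'
        have : (r : ℚ) = r' := by field_simp at hrr'; exact_mod_cast hrr'
        exact_mod_cast this
      rw [Finset.card_image_of_injective _ hinj, Finset.card_range]
    calc n s = _ := hcard.symm
      _ ≤ S.card := Finset.card_le_card hsub
  set N : ℕ := (Finset.univ : Finset (Fin k)).lcm n with hNdef
  have hdvdN : ∀ s, n s ∣ N := fun s => Finset.dvd_lcm (Finset.mem_univ s)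
  have hN0 : N ≠ 0 := aux_lcm_ne_zero _ _ fun s _ => (hn s).ne'
  set F : G := ∑ s, (P s).eval x • c s with hF
  -- N • F = 0
  have hNF : N • F = 0 := by
    rw [hF, Finset.smul_sum]
    refine Finset.sum_eq_zero fun s _ => ?_
    rw [← natCast_zsmul, smul_smul]
    exact hkill s _ (Dvd.dvd.mul_right (Int.natCast_dvd_natCast.mpr (hdvdN s)) _)
  have hordN : addOrderOf F ∣ N := addOrderOf_dvd_of_nsmul_eq_zero hNF
  -- main: F = 0
  suffices hord1 : addOrderOf F = 1 by
    rw [AddMonoid.addOrderOf_eq_one_iff] at hord1; exact hord1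
  rw [Nat.eq_one_iff_not_exists_prime_dvd]
  intro q hq hqord
  -- setup for prime q
  set e : ℕ := Finset.univ.sup fun s => (n s).factorization q with hedef
  set T : ℕ := q ^ e with hTdef
  obtain ⟨s0, -, hs0⟩ := Finset.exists_mem_eq_sup Finset.univ hne
    fun s => (n s).factorization q
  have hTn : T ∣ n s0 := by rw [hTdef, hedef, hs0]; exact Nat.ordProj_dvd _ _
  have hTN : T ∣ N := hTn.trans (hdvdN s0)
  have hT0 : 0 < T := Nat.pos_of_ne_zero (pow_ne_zero _ hq.pos.ne')
  have hTm : T ≤ S.card := le_trans (Nat.le_of_dvd (hn s0) hTn) (hnm s0)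
  set M : ℕ := N / T with hMdef
  have hTM : T * M = N := Nat.mul_div_cancel' hTN
  -- M • F = 0
  have hMF : M • F = 0 := by
    set r : ℕ := ((x - a) % (T : ℤ)).toNat with hrdef
    have hTz : (0 : ℤ) < (T : ℤ) := by exact_mod_cast hT0
    have hrnn : (0 : ℤ) ≤ (x - a) % (T : ℤ) := Int.emod_nonneg _ hTz.ne'
    have hrc : (r : ℤ) = (x - a) % (T : ℤ) := Int.toNat_of_nonneg hrnn
    have hrT : r < T := by
      have := Int.emod_lt_of_pos (x - a) hTz
      omega
    have hrm : r < S.card := lt_of_lt_of_le hrT hTm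
    have hdvd : (T : ℤ) ∣ (x - (a + (r : ℤ))) := by
      have : x - (a + (r : ℤ)) = (T : ℤ) * ((x - a) / (T : ℤ)) := by
        rw [hrc]
        have := Int.mul_ediv_add_emod (x - a) (T : ℤ)
        linarith
      exact ⟨_, this⟩
    have h0 := h r hrm
    calc M • F = M • F - M • (∑ s, (P s).eval (a + (r : ℤ)) • c s) := by
          rw [h0, smul_zero, sub_zero]
      _ = ∑ s, ((M : ℤ) * ((P s).eval x - (P s).eval (a + (r : ℤ)))) • c s := by
          rw [hF, Finset.smul_sum, Finset.smul_sum, ← Finset.sum_sub_distrib]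
          refine Finset.sum_congr rfl fun s _ => ?_
          simp only [mul_sub, sub_smul, mul_zsmul, natCast_zsmul]
      _ = 0 := by
          refine Finset.sum_eq_zero fun s _ => ?_
          refine hkill s _ ?_
          have h1 : (x - (a + (r : ℤ))) ∣ ((P s).eval x - (P s).eval (a + (r : ℤ))) :=
            Polynomial.sub_dvd_eval_sub _ _ _
          have h2 : ((T : ℤ) * (M : ℤ)) ∣
              ((M : ℤ) * ((P s).eval x - (P s).eval (a + (r : ℤ)))) := by
            rw [mul_comm (T : ℤ) (M : ℤ)]
            exact mul_dvd_mul_left _ (hdvd.trans h1)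
          refine dvd_trans ?_ h2
          have : (n s : ℤ) ∣ ((T * M : ℕ) : ℤ) := Int.natCast_dvd_natCast.mpr (hTM ▸ hdvdN s)
          simpa using this
  have hordM : addOrderOf F ∣ M := addOrderOf_dvd_of_nsmul_eq_zero hMF
  -- q ∣ M leads to contradiction
  have hqM : q ∣ M := hqord.trans hordM
  have hqTN : q ^ (e + 1) ∣ N := by
    have h2 : T * q ∣ T * M := mul_dvd_mul_left T hqM
    rw [hTM] at h2
    calc q ^ (e + 1) = T * q := by rw [hTdef, pow_succ]
      _ ∣ N := h2
  obtain ⟨s1, -, hs1⟩ := aux_pow_dvd_lcm Finset.univ n hq (Nat.succ_ne_zero e)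
    (fun s _ => (hn s).ne') hqTN
  have : e + 1 ≤ (n s1).factorization q :=
    (Nat.Prime.pow_dvd_iff_le_factorization hq (hn s1).ne').mp hs1
  have hle : (n s1).factorization q ≤ e := by
    rw [hedef]; exact Finset.le_sup (f := fun s => (n s).factorization q) (Finset.mem_univ s1)
  omega
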